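/- Let X be a Hausdorff locally convex space and K a nonempty circled convex subset of X. Then the directional asymptotic cone of the polar K° satisfies (K°)_∞ = {x* ∈ X* : σ_K(x*) ≤ 0} = {x* ∈ X* : σ_K(x*) = 0}. -/

import Mathlib

open Topology Set Pointwise Bornology

noncomputable section

section Defs

variable {X : Type*} [AddCommGroup X] [Module ℝ X] [TopologicalSpace X]

/-- Fenchel conjugate of an extended-real-valued function `f : X → ℝ ∪ {+∞}`. -/
def conjugate (f : X → EReal) (φ : X →L[ℝ] ℝ) : EReal := ⨆ x : X, (φ x : EReal) - f x

/-- Moreau–Rockafellar subdifferential of `f : X → ℝ ∪ {+∞}` at `x`. -/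
def subdiff (f : X → EReal) (x : X) : Set (X →L[ℝ] ℝ) :=
  {φ | ∀ y : X, ((φ (y - x) : ℝ) : EReal) + f x ≤ f y}

/-- A set `A ⊆ X` is weakly compact (compact for the weak topology `σ(X, X*)`). -/
def WeaklyCompact (A : Set X) : Prop := IsCompact (toWeakSpace ℝ X '' A)

/-- A set `A ⊆ X` is relatively weakly compact. -/
def RelWeaklyCompact (A : Set X) : Prop := IsCompact (closure (toWeakSpace ℝ X '' A))

/-- The directional asymptotic cone of a set of continuous linear functionals. -/
def asympCone (A : Set (X →L[ℝ] ℝ)) : Set (X →L[ℝ] ℝ) :=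
  {y | ∃ x ∈ A, ∀ l : ℝ, 0 ≤ l → x + l • y ∈ A}

/-- The class `ℰ(K)` of functions `φ : X → ℝ ∪ {+∞}` from Definition 3.1. -/
def EClass (K : Set (X →L[ℝ] ℝ)) : Set (X → EReal) :=
  {φ | (∀ ψ : X →L[ℝ] ℝ, conjugate φ ψ ≠ ⊥) ∧ conjugate φ 0 = 0 ∧
    asympCone K ⊆ {ψ | conjugate φ ψ ≠ ⊤} ∧ {ψ | conjugate φ ψ ≠ ⊤} ⊆ K ∧
    (∀ ψ ∈ K \ asympCone K,
      sSup {v : EReal | ∃ η : ℝ, 0 < η ∧ conjugate φ (η • ψ) ≠ ⊤ ∧ v = conjugate φ (η • ψ)} = ⊤) ∧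
    (∀ ψ : X →L[ℝ] ℝ, conjugate φ ψ ≠ ⊤ → ∃ x : X, ψ ∈ subdiff φ x)}

/-- Polar of a subset of `X`. -/
def pol (K : Set X) : Set (X →L[ℝ] ℝ) := {φ | ∀ x ∈ K, φ x ≤ 1}

/-- Support function of a subset of `X`. -/
def supportFn (A : Set X) (φ : X →L[ℝ] ℝ) : EReal := sSup ((fun x => ((φ x : ℝ) : EReal)) '' A)

/-- A set is open for the Mackey topology `τ(X*,X)`: around each of its points it contains a
translate of the polar of some weakly compact balanced (circled) convex subset of `X`. -/
def MackeyOpen (U : Set (X →L[ℝ] ℝ)) : Prop :=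
  ∀ φ ∈ U, ∃ K : Set X, WeaklyCompact K ∧ Balanced ℝ K ∧ Convex ℝ K ∧
    {ψ : X →L[ℝ] ℝ | ∀ x ∈ K, (ψ - φ) x ≤ 1} ⊆ U

/-- `F : X* → ℝ ∪ {±∞}` is continuous at `φ` for the Mackey topology `τ(X*,X)`. -/
def MackeyContinuousAt (F : (X →L[ℝ] ℝ) → EReal) (φ : X →L[ℝ] ℝ) : Prop :=
  ∀ V ∈ 𝓝 (F φ), ∃ K : Set X, WeaklyCompact K ∧ Balanced ℝ K ∧ Convex ℝ K ∧
    ∀ ψ : X →L[ℝ] ℝ, (∀ x ∈ K, (ψ - φ) x ≤ 1) → F ψ ∈ V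

/-- `f` is epi-pointed: `f*` is proper and `τ(X*,X)`-continuous at some point of its domain. -/
def EpiPointed (f : X → EReal) : Prop :=
  (∃ ψ : X →L[ℝ] ℝ, conjugate f ψ ≠ ⊤) ∧ (∀ ψ : X →L[ℝ] ℝ, conjugate f ψ ≠ ⊥) ∧
  ∃ φ : X →L[ℝ] ℝ, conjugate f φ ≠ ⊤ ∧ MackeyContinuousAt (conjugate f) φ

/-- Relative compactness in `X × ℝ` for the product of the weak topology `σ(X, X*)` on `X`
with the usual topology on `ℝ`. -/
def RelWeaklyCompactProd (A : Set (X × ℝ)) : Prop :=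
  IsCompact (closure ((fun p : X × ℝ => ((toWeakSpace ℝ X p.1 : WeakSpace ℝ X), p.2)) '' A))

/-- Epigraph of `f : X → ℝ ∪ {+∞}` (as a subset of `X × ℝ`). -/
def Epigr (f : X → EReal) : Set (X × ℝ) := {p | f p.1 ≤ (p.2 : EReal)}

/-- Inf-convolution of two extended-real-valued functions. -/
def infConv (f g : X → EReal) (x : X) : EReal := ⨅ z : X, f z + g (x - z)

/-- Convexity for extended-real-valued functions. -/
def EConvex (f : X → EReal) : Prop :=
  ∀ x y : X, ∀ a b : ℝ, 0 ≤ a → 0 ≤ b → a + b = 1 →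
    f (a • x + b • y) ≤ (a : EReal) * f x + (b : EReal) * f y

/-- The algebraic interior of a set of continuous linear functionals. -/
def algInt (A : Set (X →L[ℝ] ℝ)) : Set (X →L[ℝ] ℝ) :=
  {a ∈ A | ∀ ψ : X →L[ℝ] ℝ, ∃ δ > (0:ℝ), ∀ l ∈ Set.Icc (0:ℝ) δ, a + l • ψ ∈ A}

/-- Subdifferential of a real-valued function on `X*`, with respect to the pairing with `X`. -/
def subdiffStar (g : (X →L[ℝ] ℝ) → ℝ) (φ : X →L[ℝ] ℝ) : Set X :=
  {x | ∀ ψ : X →L[ℝ] ℝ, (ψ - φ) x + g φ ≤ g ψ}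

end Defs

section Defs2

variable {X : Type*} [AddCommGroup X] [Module ℝ X] [TopologicalSpace X]

/-- Support function (on `X`) of a set of continuous linear functionals. -/
def supportFnStar (A : Set (X →L[ℝ] ℝ)) (x : X) : EReal :=
  sSup ((fun ψ : X →L[ℝ] ℝ => ((ψ x : ℝ) : EReal)) '' A)

/-- Subdifferential of an extended-real-valued function on `X*`, w.r.t. the pairing with `X`. -/
def subdiffStarE (F : (X →L[ℝ] ℝ) → EReal) (φ : X →L[ℝ] ℝ) : Set X :=
  {x | ∀ ψ : X →L[ℝ] ℝ, (((ψ - φ) x : ℝ) : EReal) + F φ ≤ F ψ}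

end Defs2

variable {X : Type*} [AddCommGroup X] [Module ℝ X] [TopologicalSpace X]
  [IsTopologicalAddGroup X] [ContinuousSMul ℝ X] [LocallyConvexSpace ℝ X] [T2Space X]

/-- The asymptotic cone of the polar `K°` is `{x* : σ_K(x*) ≤ 0} = {x* : σ_K(x*) = 0}`. -/
theorem asympCone_polar_eq_nonpos_support
    (K : Set X) (hne : K.Nonempty) (hbal : Balanced ℝ K) (hconv : Convex ℝ K) :
    asympCone (pol K) = {φ : X →L[ℝ] ℝ | supportFn K φ ≤ 0} ∧
    {φ : X →L[ℝ] ℝ | supportFn K φ ≤ 0} = {φ : X →L[ℝ] ℝ | supportFn K φ = 0} := by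
  obtain ⟨x₀, hx₀⟩ := hne
  have h0K : (0:X) ∈ K := by
    have := hbal 0 (by simp) ⟨x₀, hx₀, zero_smul ℝ x₀⟩
    simpa using this
  constructor
  · ext φ
    simp only [Set.mem_setOf_eq]
    constructor
    · rintro ⟨ψ, hψ, hl⟩
      refine sSup_le ?_
      rintro v ⟨x, hx, rfl⟩
      simp only
      norm_cast
      by_contra h
      push_neg at h
      have hφx : 0 < φ x := h
      set l : ℝ := (2 - ψ x) / φ x with hldef
      have hl2 : 0 ≤ l := div_nonneg (by linarith [hψ x hx]) hφx.le
      have := hl l hl2 x hx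
      simp only [ContinuousLinearMap.add_apply, ContinuousLinearMap.smul_apply,
        smul_eq_mul] at this
      rw [hldef, div_mul_cancel₀ _ (ne_of_gt hφx)] at this
      linarith
    · intro hφ
      refine ⟨0, fun x hx => by simp, fun l hl x hx => ?_⟩
      have hmem : ((φ x : ℝ) : EReal) ∈ (fun y => ((φ y : ℝ) : EReal)) '' K := ⟨x, hx, rfl⟩
      have hx' : ((φ x : ℝ) : EReal) ≤ 0 := le_trans (le_sSup hmem) hφ
      have hle : φ x ≤ 0 := by exact_mod_cast hx'
      simp only [ContinuousLinearMap.add_apply, ContinuousLinearMap.zero_apply,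
        ContinuousLinearMap.smul_apply, smul_eq_mul, zero_add]
      nlinarith [hle]
  · ext φ
    simp only [Set.mem_setOf_eq]
    constructor
    · intro h
      refine le_antisymm h ?_
      have : ((φ 0 : ℝ) : EReal) ≤ supportFn K φ := le_sSup ⟨0, h0K, rfl⟩
      simpa using this
    · intro h; exact h.le

end
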